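/- If u : D² → ℂ² is a C² weakly conformal Lagrangian map with continuous Lagrangian angle conj(g) satisfying (1/r)∂_θ u = −conj(g) J ∂_r u (where J denotes quaternionic multiplication by j under the identification ℂ² ≅ ℍ), then div(g ∇u) = 0 on D². -/

import Mathlib

/-- The real (Euclidean) inner product on `ℂ² ≅ ℝ⁴`. -/
noncomputable def rinner (u v : ℂ × ℂ) : ℝ :=
  (u.1 * (starRingEnd ℂ) v.1).re + (u.2 * (starRingEnd ℂ) v.2).re

/-- The standard symplectic form on `ℂ²`. -/
noncomputable def omegaStd (u v : ℂ × ℂ) : ℝ :=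
  ((starRingEnd ℂ) u.1 * v.1).im + ((starRingEnd ℂ) u.2 * v.2).im

/-- Quaternionic multiplication by `j` under the identification `ℂ² ≅ ℍ`,
`(z, w) ↦ z + w j`:  `J(z,w) = (−conj w, conj z)`. -/
noncomputable def Jquat (v : ℂ × ℂ) : ℂ × ℂ :=
  (-(starRingEnd ℂ) v.2, (starRingEnd ℂ) v.1)

lemma Jquat_add (v w : ℂ × ℂ) : Jquat (v + w) = Jquat v + Jquat w := by
  simp [Jquat, Prod.ext_iff]; ring

lemma Jquat_smulR (c : ℝ) (v : ℂ × ℂ) : Jquat (c • v) = c • Jquat v := by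
  simp [Jquat, Prod.ext_iff, Complex.real_smul]

lemma Jquat_smulC (a : ℂ) (v : ℂ × ℂ) :
    Jquat (a • v) = (starRingEnd ℂ) a • Jquat v := by
  simp [Jquat, Prod.ext_iff, smul_eq_mul]

lemma Jquat_Jquat (v : ℂ × ℂ) : Jquat (Jquat v) = -v := by
  simp [Jquat, Prod.ext_iff]

lemma Jquat_neg (v : ℂ × ℂ) : Jquat (-v) = -Jquat v := by
  simp [Jquat, Prod.ext_iff]

lemma Jquat_zero : Jquat (0 : ℂ × ℂ) = 0 := by simp [Jquat]

/-- `Jquat` as a continuous `ℝ`-linear map. -/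
noncomputable def JL : (ℂ × ℂ) →L[ℝ] ℂ × ℂ :=
  LinearMap.toContinuousLinearMap
    { toFun := Jquat
      map_add' := Jquat_add
      map_smul' := Jquat_smulR }

@[simp] lemma JL_apply (v : ℂ × ℂ) : JL v = Jquat v := rfl

lemma deriv_ang (u : ℝ × ℝ → ℂ × ℂ) (hu : Differentiable ℝ u) (r θ : ℝ) :
    deriv (fun t => u (r * Real.cos t, r * Real.sin t)) θ =
      fderiv ℝ u (r * Real.cos θ, r * Real.sin θ) (r * -Real.sin θ, r * Real.cos θ) := by
  have h1 : HasDerivAt (fun t : ℝ => (r * Real.cos t, r * Real.sin t))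
      (r * -Real.sin θ, r * Real.cos θ) θ :=
    ((Real.hasDerivAt_cos θ).const_mul r).prodMk ((Real.hasDerivAt_sin θ).const_mul r)
  exact ((hu _).hasFDerivAt.comp_hasDerivAt θ h1).deriv

lemma deriv_rad (u : ℝ × ℝ → ℂ × ℂ) (hu : Differentiable ℝ u) (r θ : ℝ) :
    deriv (fun s => u (s * Real.cos θ, s * Real.sin θ)) r =
      fderiv ℝ u (r * Real.cos θ, r * Real.sin θ) (Real.cos θ, Real.sin θ) := by
  have h1 : HasDerivAt (fun s : ℝ => (s * Real.cos θ, s * Real.sin θ))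
      (Real.cos θ, Real.sin θ) r :=
    (hasDerivAt_mul_const (Real.cos θ)).prodMk (hasDerivAt_mul_const (Real.sin θ))
  exact ((hu _).hasFDerivAt.comp_hasDerivAt r h1).deriv

lemma keyF (A : (ℝ × ℝ) →L[ℝ] ℂ × ℂ) (a : ℂ) (ha : a * (starRingEnd ℂ) a = 1)
    (c s : ℝ) (hcs : c ^ 2 + s ^ 2 = 1)
    (h : A (-s, c) = (-a) • Jquat (A (c, s))) :
    A (0, 1) + a • Jquat (A (1, 0)) = 0 := by
  set X := A (1, 0) with hXdef
  set Y := A (0, 1) with hYdef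
  set F : ℂ × ℂ := Y + a • Jquat X with hF
  have e1 : ((-s, c) : ℝ × ℝ) = (-s) • (1, 0) + c • (0, 1) := by
    simp [Prod.ext_iff]
  have e2 : ((c, s) : ℝ × ℝ) = c • (1, 0) + s • (0, 1) := by
    simp [Prod.ext_iff]
  rw [e1, e2, map_add, map_smul, map_smul, map_add, map_smul, map_smul] at h
  have h' : (-s) • X + c • Y = -(c • (a • Jquat X) + s • (a • Jquat Y)) := by
    rw [h, Jquat_add, Jquat_smulR, Jquat_smulR]
    rw [neg_smul, smul_add, smul_comm a c, smul_comm a s]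
  have hJF : a • Jquat F = a • Jquat Y - X := by
    rw [hF, Jquat_add, Jquat_smulC, smul_add, smul_smul, Jquat_Jquat, ha, one_smul]
    abel
  have hE : c • F + s • (a • Jquat F) = 0 := by
    have step : c • F + s • (a • Jquat F)
        = ((-s) • X + c • Y) + (c • (a • Jquat X) + s • (a • Jquat Y)) := by
      rw [hJF, hF]; module
    rw [step, h', neg_add_cancel]
  have hE2 : c • (a • Jquat F) - s • F = 0 := by
    have := congrArg (fun w => a • Jquat w) hE
    simp only [Jquat_add, Jquat_smulR] at this
    rw [Jquat_zero, smul_zero] at this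
    have haJJ : a • Jquat (a • Jquat F) = -F := by
      rw [Jquat_smulC, smul_smul, ha, one_smul, Jquat_Jquat]
    rw [smul_add, smul_comm a c, smul_comm a s, haJJ, smul_neg] at this
    rw [sub_eq_add_neg]
    exact this
  have hfin : (c ^ 2 + s ^ 2) • F =
      c • (c • F + s • (a • Jquat F)) - s • (c • (a • Jquat F) - s • F) := by module
  rw [hE, hE2, hcs, smul_zero, smul_zero, sub_zero, one_smul] at hfin
  exact hfin

/-- If `u : D² → ℂ²` is a `C²` weakly conformal Lagrangian map with continuous
Lagrangian angle `conj(g)` satisfying `(1/r)∂_θ u = −conj(g) J ∂_r u`, then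
`div(g ∇u) = 0` on `D²`. -/
theorem structural_equation (u : ℝ × ℝ → ℂ × ℂ) (g : ℝ × ℝ → ℂ)
    (hu : ContDiff ℝ 2 u) (hg : Continuous g) (hg1 : ∀ v, ‖g v‖ = 1)
    (hconf₁ : ∀ v, rinner (fderiv ℝ u v (1, 0)) (fderiv ℝ u v (0, 1)) = 0)
    (hconf₂ : ∀ v, rinner (fderiv ℝ u v (1, 0)) (fderiv ℝ u v (1, 0)) =
      rinner (fderiv ℝ u v (0, 1)) (fderiv ℝ u v (0, 1)))
    (hlag : ∀ v, omegaStd (fderiv ℝ u v (1, 0)) (fderiv ℝ u v (0, 1)) = 0)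
    (hstruct : ∀ r θ : ℝ, 0 < r → (r * Real.cos θ, r * Real.sin θ) ∈ Metric.ball (0 : ℝ × ℝ) 1 →
      r⁻¹ • deriv (fun t => u (r * Real.cos t, r * Real.sin t)) θ =
        (-(starRingEnd ℂ) (g (r * Real.cos θ, r * Real.sin θ))) •
          Jquat (deriv (fun s => u (s * Real.cos θ, s * Real.sin θ)) r)) :
    ∀ v ∈ Metric.ball (0 : ℝ × ℝ) 1,
      fderiv ℝ (fun w => g w • fderiv ℝ u w (1, 0)) v (1, 0) +
        fderiv ℝ (fun w => g w • fderiv ℝ u w (0, 1)) v (0, 1) = 0 := by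
  intro v hv
  have hud : Differentiable ℝ u := hu.differentiable two_ne_zero
  have hgg : ∀ p, g p * (starRingEnd ℂ) (g p) = 1 := by
    intro p
    rw [Complex.mul_conj, Complex.normSq_eq_norm_sq, hg1, one_pow, Complex.ofReal_one]
  -- The structural relation in Cartesian form, away from the origin.
  have hFne : ∀ p ∈ Metric.ball (0 : ℝ × ℝ) 1, p ≠ 0 →
      fderiv ℝ u p (0, 1) + (starRingEnd ℂ) (g p) • Jquat (fderiv ℝ u p (1, 0)) = 0 := by
    intro p hp hp0
    set z : ℂ := (p.1 : ℂ) + p.2 * Complex.I with hzdef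
    have hre : z.re = p.1 := by simp [hzdef]
    have him : z.im = p.2 := by simp [hzdef]
    have hz : z ≠ 0 := by
      intro h0
      apply hp0
      have h1 : p.1 = 0 := by rw [← hre, h0, Complex.zero_re]
      have h2 : p.2 = 0 := by rw [← him, h0, Complex.zero_im]
      exact Prod.ext h1 h2
    have hr : 0 < ‖z‖ := norm_pos_iff.mpr hz
    have hc : ‖z‖ * Real.cos (Complex.arg z) = p.1 := by
      rw [Complex.norm_mul_cos_arg, hre]
    have hs : ‖z‖ * Real.sin (Complex.arg z) = p.2 := by
      rw [Complex.norm_mul_sin_arg, him]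
    have hp' : (‖z‖ * Real.cos (Complex.arg z),
        ‖z‖ * Real.sin (Complex.arg z)) = p := Prod.ext hc hs
    have hst := hstruct (‖z‖) (Complex.arg z) hr (by rw [hp']; exact hp)
    rw [deriv_ang u hud, deriv_rad u hud, hp'] at hst
    have hsm : ((‖z‖ * -Real.sin (Complex.arg z),
        ‖z‖ * Real.cos (Complex.arg z)) : ℝ × ℝ) =
        (‖z‖) • ((-Real.sin (Complex.arg z), Real.cos (Complex.arg z)) : ℝ × ℝ) := by
      simp [Prod.ext_iff]
    rw [hsm, map_smul, smul_smul, inv_mul_cancel₀ hr.ne', one_smul] at hst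
    have ha : (starRingEnd ℂ) (g p) * (starRingEnd ℂ) ((starRingEnd ℂ) (g p)) = 1 := by
      rw [Complex.conj_conj, mul_comm]
      exact hgg p
    exact keyF (fderiv ℝ u p) ((starRingEnd ℂ) (g p)) ha (Real.cos (Complex.arg z))
      (Real.sin (Complex.arg z)) (by rw [add_comm]; exact Real.sin_sq_add_cos_sq _) hst
  -- Extend to the origin by continuity.
  have hDcont : Continuous (fderiv ℝ u) := hu.continuous_fderiv two_ne_zero
  have hFcont : Continuous (fun p => fderiv ℝ u p (0, 1) +
      (starRingEnd ℂ) (g p) • Jquat (fderiv ℝ u p (1, 0))) := by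
    apply Continuous.add
    · exact (ContinuousLinearMap.apply ℝ (ℂ × ℂ) ((0, 1) : ℝ × ℝ)).continuous.comp hDcont
    · exact ((Complex.continuous_conj.comp hg).smul
        (JL.continuous.comp
          ((ContinuousLinearMap.apply ℝ (ℂ × ℂ) ((1, 0) : ℝ × ℝ)).continuous.comp hDcont)))
  have hF : ∀ p ∈ Metric.ball (0 : ℝ × ℝ) 1,
      fderiv ℝ u p (0, 1) + (starRingEnd ℂ) (g p) • Jquat (fderiv ℝ u p (1, 0)) = 0 := by
    intro p hp
    rcases eq_or_ne p 0 with rfl | hp0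
    · -- continuity argument at the origin
      set F : ℝ × ℝ → ℂ × ℂ := fun p => fderiv ℝ u p (0, 1) +
        (starRingEnd ℂ) (g p) • Jquat (fderiv ℝ u p (1, 0)) with hFdef
      have h1 : Filter.Tendsto F (nhdsWithin (0 : ℝ × ℝ) {(0 : ℝ × ℝ)}ᶜ) (nhds (F 0)) :=
        (hFcont.continuousAt).continuousWithinAt.tendsto
      have h2 : Filter.Tendsto F (nhdsWithin (0 : ℝ × ℝ) {(0 : ℝ × ℝ)}ᶜ) (nhds 0) := by
        apply Filter.Tendsto.congr' _ tendsto_const_nhds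
        have hball : Metric.ball (0 : ℝ × ℝ) 1 ∈ nhdsWithin (0 : ℝ × ℝ) {(0 : ℝ × ℝ)}ᶜ :=
          nhdsWithin_le_nhds (Metric.ball_mem_nhds _ one_pos)
        filter_upwards [hball, self_mem_nhdsWithin] with w hw hw0
        exact (hFne w hw hw0).symm
      exact tendsto_nhds_unique h1 h2
    · exact hFne p hp hp0
  -- Cartesian identities on the ball.
  have heq1 : ∀ p ∈ Metric.ball (0 : ℝ × ℝ) 1,
      g p • fderiv ℝ u p (1, 0) = Jquat (fderiv ℝ u p (0, 1)) := by
    intro p hp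
    have hY : fderiv ℝ u p (0, 1) =
        -((starRingEnd ℂ) (g p) • Jquat (fderiv ℝ u p (1, 0))) :=
      eq_neg_of_add_eq_zero_left (hF p hp)
    rw [hY, Jquat_neg, Jquat_smulC, Complex.conj_conj, Jquat_Jquat, smul_neg, neg_neg]
  have heq2 : ∀ p ∈ Metric.ball (0 : ℝ × ℝ) 1,
      g p • fderiv ℝ u p (0, 1) = -Jquat (fderiv ℝ u p (1, 0)) := by
    intro p hp
    have hY : fderiv ℝ u p (0, 1) =
        -((starRingEnd ℂ) (g p) • Jquat (fderiv ℝ u p (1, 0))) :=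
      eq_neg_of_add_eq_zero_left (hF p hp)
    rw [hY, smul_neg, smul_smul, hgg p, one_smul]
  -- replace the integrand by linear expressions in the derivative
  have hmem : Metric.ball (0 : ℝ × ℝ) 1 ∈ nhds v := Metric.isOpen_ball.mem_nhds hv
  have hev1 : (fun w => g w • fderiv ℝ u w (1, 0)) =ᶠ[nhds v]
      (fun w => JL (fderiv ℝ u w (0, 1))) := by
    filter_upwards [hmem] with w hw
    rw [JL_apply]; exact heq1 w hw
  have hev2 : (fun w => g w • fderiv ℝ u w (0, 1)) =ᶠ[nhds v]
      (fun w => -(JL (fderiv ℝ u w (1, 0)))) := by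
    filter_upwards [hmem] with w hw
    rw [JL_apply]; exact heq2 w hw
  rw [hev1.fderiv_eq, hev2.fderiv_eq]
  -- now compute using the second derivative
  have hD : Differentiable ℝ (fderiv ℝ u) :=
    (hu.fderiv_right (m := 1) (by norm_num)).differentiable one_ne_zero
  have h1 : HasFDerivAt (fun w => JL (fderiv ℝ u w (0, 1)))
      ((JL.comp (ContinuousLinearMap.apply ℝ (ℂ × ℂ) ((0, 1) : ℝ × ℝ))).comp
        (fderiv ℝ (fderiv ℝ u) v)) v :=
    ((JL.comp (ContinuousLinearMap.apply ℝ (ℂ × ℂ) ((0, 1) : ℝ × ℝ))).hasFDerivAt).comp v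
      (hD v).hasFDerivAt
  have h2 : HasFDerivAt (fun w => -(JL (fderiv ℝ u w (1, 0))))
      (-((JL.comp (ContinuousLinearMap.apply ℝ (ℂ × ℂ) ((1, 0) : ℝ × ℝ))).comp
        (fderiv ℝ (fderiv ℝ u) v))) v :=
    (((JL.comp (ContinuousLinearMap.apply ℝ (ℂ × ℂ) ((1, 0) : ℝ × ℝ))).hasFDerivAt).comp v
      (hD v).hasFDerivAt).neg
  rw [h1.fderiv, h2.fderiv]
  have hsym : fderiv ℝ (fderiv ℝ u) v (1, 0) (0, 1) =
      fderiv ℝ (fderiv ℝ u) v (0, 1) (1, 0) :=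
    (hu.contDiffAt.isSymmSndFDerivAt (by simp [minSmoothness_of_isRCLikeNormedField])) (1, 0) (0, 1)
  simp only [ContinuousLinearMap.comp_apply, ContinuousLinearMap.neg_apply,
    ContinuousLinearMap.apply_apply, JL_apply, hsym]
  exact add_neg_cancel _
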